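/- arXiv:2109.00582 — 3 statements merged into one kernel-verified Lean document; each statement's English description precedes it below -/
import Mathlib

section
/- For p in (0, 1/2), the inequality 2 * p^2 * log p > (2p)^2 * log(2p) holds if and only if p < 1/4. -/
theorem stmt_2 (p : ℝ) (hp : 0 < p) (hp2 : p < 1 / 2) :
    2 * p ^ 2 * Real.log p > (2 * p) ^ 2 * Real.log (2 * p) ↔ p < 1 / 4 := by
  have h4 : Real.log (1 / 4 : ℝ) = -(2 * Real.log 2) := by
    rw [one_div, Real.log_inv, show (4:ℝ) = 2 ^ 2 by norm_num, Real.log_pow]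
    push_cast; ring
  have hpp : 0 < p ^ 2 := by positivity
  have key : (2 * p ^ 2 * Real.log p > (2 * p) ^ 2 * Real.log (2 * p)) ↔
      Real.log p < Real.log (1 / 4) := by
    rw [Real.log_mul two_ne_zero hp.ne', h4]
    constructor <;> intro h <;> nlinarith [hpp]
  rw [key, Real.log_lt_log_iff hp (by norm_num)]
end

section
/- Fix p2 in (0, e^{-1/2}). Then there exists epsilon > 0 such that for all p1 in (0, epsilon), p1^2 * log p1 + p2^2 * log p2 > (p1 + p2)^2 * log(p1 + p2). -/
theorem stmt_7 (p2 : ℝ) (h0 : 0 < p2) (h1 : p2 < Real.exp (-(1 / 2))) :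
    ∃ ε > 0, ∀ p1 : ℝ, 0 < p1 → p1 < ε →
      p1 ^ 2 * Real.log p1 + p2 ^ 2 * Real.log p2 >
        (p1 + p2) ^ 2 * Real.log (p1 + p2) := by
  have hlog2 : Real.log p2 < -(1/2) := by
    calc Real.log p2 < Real.log (Real.exp (-(1/2))) := Real.log_lt_log h0 (by norm_num at h1 ⊢; exact h1)
      _ = -(1/2) := Real.log_exp _
  obtain ⟨c, hc⟩ : ∃ c : ℝ, c = -(1/2) - Real.log p2 := ⟨_, rfl⟩
  have hc0 : 0 < c := by rw [hc]; linarith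
  refine ⟨min (c*p2/2) ((c*p2/2)^2), by positivity, ?_⟩
  intro p1 hp1 hpe
  have hd : p1 < c*p2/2 := lt_of_lt_of_le hpe (min_le_left _ _)
  have hd2 : p1 < (c*p2/2)^2 := lt_of_lt_of_le hpe (min_le_right _ _)
  obtain ⟨s, hs⟩ : ∃ s : ℝ, s = Real.sqrt p1 := ⟨_, rfl⟩
  have hs0 : 0 < s := hs ▸ Real.sqrt_pos.2 hp1
  have hsp : s^2 = p1 := hs ▸ Real.sq_sqrt hp1.le
  have hlogs : -(1/s) ≤ Real.log s := by
    have h' := Real.log_le_sub_one_of_pos (show (0:ℝ) < 1/s by positivity)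
    rw [Real.log_div one_ne_zero (ne_of_gt hs0), Real.log_one] at h'
    have h1s : 0 < 1/s := by positivity
    linarith
  have hlogp1 : Real.log p1 = 2 * Real.log s := by
    rw [← hsp, Real.log_pow]; push_cast; ring
  have hsc : s < c*p2/2 := by
    have h' : s < Real.sqrt ((c*p2/2)^2) := hs ▸ Real.sqrt_lt_sqrt hp1.le hd2
    rwa [Real.sqrt_sq (by positivity)] at h'
  have hsl : -1 ≤ s * Real.log s := by
    have h' := mul_le_mul_of_nonneg_left hlogs hs0.le
    rw [mul_neg, mul_one_div, div_self (ne_of_gt hs0)] at h'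
    linarith
  have hE : p1^2 * Real.log p1 > -(c*p2*p1) := by
    have h3 := mul_le_mul_of_nonneg_left hsl (le_of_lt (pow_pos hs0 3))
    have key : p1^2 * Real.log p1 ≥ -(2*p1*s) := by
      calc p1^2 * Real.log p1 = 2*(s^3*(s*Real.log s)) := by rw [hlogp1, ← hsp]; ring
        _ ≥ 2*(s^3*(-1)) := by linarith
        _ = -(2*p1*s) := by rw [← hsp]; ring
    have h4 : p1*s < p1*(c*p2/2) := by
      exact mul_lt_mul_of_pos_left hsc hp1
    nlinarith [key, h4]
  have hA : Real.log (p1+p2) ≤ Real.log p2 + p1/p2 := by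
    have h' := Real.log_le_sub_one_of_pos (show (0:ℝ) < (p1+p2)/p2 by positivity)
    rw [Real.log_div (by positivity) (ne_of_gt h0)] at h'
    have heq : (p1+p2)/p2 - 1 = p1/p2 := by field_simp; ring
    linarith [heq ▸ h']
  have hdiv : p1/p2 < c/2 := by
    rw [div_lt_iff₀ h0]; linarith
  have hU : Real.log (p1+p2) ≤ -(1/2) - c/2 := by
    have : Real.log p2 = -(1/2) - c := by rw [hc]; ring
    linarith
  have hA' : p2^2 * Real.log (p1+p2) ≤ p2^2 * Real.log p2 + p1*p2 := by
    have h' := mul_le_mul_of_nonneg_left hA (le_of_lt (pow_pos h0 2))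
    have heq : p2^2 * (Real.log p2 + p1/p2) = p2^2 * Real.log p2 + p1*p2 := by
      field_simp
    linarith [heq ▸ h']
  have hUa : p1^2 * Real.log (p1+p2) ≤ p1^2 * (-(1/2) - c/2) :=
    mul_le_mul_of_nonneg_left hU (sq_nonneg p1)
  have hUb : (2*p1*p2) * Real.log (p1+p2) ≤ (2*p1*p2) * (-(1/2) - c/2) :=
    mul_le_mul_of_nonneg_left hU (by positivity)
  nlinarith [hUa, hUb, hA', hE, sq_nonneg p1, mul_nonneg hc0.le (sq_nonneg p1)]
end

section
/- Fix p2 in (e^{-1/2}, 1). Then there exists epsilon > 0 such that for all p1 in (0, epsilon) with p1 + p2 < 1, p1^2 * log p1 + p2^2 * log p2 < (p1 + p2)^2 * log(p1 + p2). -/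
open Real

lemma aux_strictMono : StrictMonoOn (fun x : ℝ => x ^ 2 * Real.log x)
    (Set.Ici (Real.exp (-(1 / 2)))) := by
  have hpos : (0 : ℝ) < Real.exp (-(1 / 2)) := Real.exp_pos _
  apply strictMonoOn_of_deriv_pos (convex_Ici _)
  · apply ContinuousOn.mul (continuousOn_pow 2)
    apply Real.continuousOn_log.mono
    intro x hx
    exact ne_of_gt (lt_of_lt_of_le hpos hx)
  · intro x hx
    rw [interior_Ici] at hx
    have hx0 : 0 < x := lt_trans hpos hx
    have hd : HasDerivAt (fun x : ℝ => x ^ 2 * Real.log x)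
        (2 * x * Real.log x + x ^ 2 * x⁻¹) x := by
      have h1 : HasDerivAt (fun x : ℝ => x ^ 2) (2 * x) x := by
        simpa using hasDerivAt_pow 2 x
      exact h1.mul (Real.hasDerivAt_log (ne_of_gt hx0))
    rw [hd.deriv]
    have hlog : -(1 / 2 : ℝ) < Real.log x := (Real.lt_log_iff_exp_lt hx0).2 hx
    have : x ^ 2 * x⁻¹ = x := by field_simp [pow_two]
    rw [this]
    nlinarith [hlog, hx0]

theorem stmt_8 (p2 : ℝ) (h0 : Real.exp (-(1 / 2)) < p2) (h1 : p2 < 1) :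
    ∃ ε > 0, ∀ p1 : ℝ, 0 < p1 → p1 < ε → p1 + p2 < 1 →
      p1 ^ 2 * Real.log p1 + p2 ^ 2 * Real.log p2 <
        (p1 + p2) ^ 2 * Real.log (p1 + p2) := by
  refine ⟨1, one_pos, fun p1 hp1 hp1' hsum => ?_⟩
  have hmono := aux_strictMono (le_of_lt h0)
    (le_of_lt (lt_of_lt_of_le h0 (by linarith))) (by linarith : p2 < p1 + p2)
  have hlog1 : Real.log p1 < 0 := Real.log_neg hp1 (by linarith)
  have hneg : p1 ^ 2 * Real.log p1 < 0 :=
    mul_neg_of_pos_of_neg (by positivity) hlog1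
  simp only at hmono
  linarith
end
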